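/- arXiv:1306.0720 — 2 statements merged into one kernel-verified Lean document; each statement's English description precedes it below -/
import Mathlib

section
/- Let T be a row contraction on H with n-th defect space D_n (the closed range of I - Ψ_T^n(I)). Then the row operator T maps D_n^d into D_{n+1}; that is, for any x_1,...,x_d ∈ D_n, Σ_{i=1}^d T_i x_i ∈ D_{n+1}. -/
open ContinuousLinearMap

/-- The completely positive map `Ψ_T(X) = ∑ i, T i X (T i)*` associated to a `d`-tuple. -/
noncomputable def psiMap {H : Type*} [NormedAddCommGroup H] [InnerProductSpace ℂ H]
    [CompleteSpace H] {d : ℕ} (T : Fin d → H →L[ℂ] H) (X : H →L[ℂ] H) : H →L[ℂ] H :=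
  ∑ i, T i ∘L X ∘L adjoint (T i)

/-- The `n`-th defect space: the closure of the range of `I - Ψ_T^n(I)`. -/
noncomputable def defectSpace {H : Type*} [NormedAddCommGroup H] [InnerProductSpace ℂ H]
    [CompleteSpace H] {d : ℕ} (T : Fin d → H →L[ℂ] H) (n : ℕ) : Submodule ℂ H :=
  (LinearMap.range ((1 - (psiMap T)^[n] 1 : H →L[ℂ] H) : H →ₗ[ℂ] H)).topologicalClosure

section Aux

variable {H : Type*} [NormedAddCommGroup H] [InnerProductSpace ℂ H] [CompleteSpace H]
  {d : ℕ} (T : Fin d → H →L[ℂ] H)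

local notation "⟪" x ", " y "⟫" => @inner ℂ _ _ x y

lemma psiMap_apply (X : H →L[ℂ] H) (y : H) :
    psiMap T X y = ∑ i, T i (X (adjoint (T i) y)) := by
  simp [psiMap, ContinuousLinearMap.sum_apply]

lemma psiMap_sub (X Y : H →L[ℂ] H) :
    psiMap T (X - Y) = psiMap T X - psiMap T Y := by
  simp [psiMap, ContinuousLinearMap.comp_sub, ContinuousLinearMap.sub_comp,
    Finset.sum_sub_distrib]

lemma defect_succ (n : ℕ) :
    (1 - (psiMap T)^[n + 1] 1 : H →L[ℂ] H)
      = (1 - psiMap T 1) + psiMap T (1 - (psiMap T)^[n] 1) := by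
  rw [Function.iterate_succ_apply', psiMap_sub]
  abel

lemma psiMap_isPositive {X : H →L[ℂ] H} (hX : X.IsPositive) :
    (psiMap T X).IsPositive := by
  rw [psiMap]
  exact Finset.sum_induction _ _ (fun a b ha hb => ha.add hb)
    (ContinuousLinearMap.isPositive_zero) (fun i _ => hX.conj_adjoint (T i))

lemma defect_isPositive (hT : (1 - psiMap T 1).IsPositive) (n : ℕ) :
    (1 - (psiMap T)^[n] 1 : H →L[ℂ] H).IsPositive := by
  induction n with
  | zero => simpa using ContinuousLinearMap.isPositive_zero
  | succ n ih =>
      rw [defect_succ]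
      exact hT.add (psiMap_isPositive T ih)

/-- A positive operator with vanishing quadratic form at `x` kills `x`. -/
lemma IsPositive.apply_eq_zero' {A : H →L[ℂ] H} (hA : A.IsPositive) {x : H}
    (hx : RCLike.re ⟪A x, x⟫ = 0) : A x = 0 := by
  have hsym : ∀ u v : H, ⟪A u, v⟫ = ⟪u, A v⟫ :=
    (ContinuousLinearMap.isSelfAdjoint_iff_isSymmetric.mp hA.isSelfAdjoint)
  have ha0 : (0:ℝ) ≤ RCLike.re ⟪A x, A x⟫ := by
    rw [show (RCLike.re ⟪A x, A x⟫ : ℝ) = ‖A x‖ ^ 2 by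
      rw [← inner_self_eq_norm_sq (𝕜 := ℂ)]]
    positivity
  have hC0 : (0:ℝ) ≤ RCLike.re ⟪A (A x), A x⟫ := hA.re_inner_nonneg_left (A x)
  set a : ℝ := RCLike.re ⟪A x, A x⟫
  set C : ℝ := RCLike.re ⟪A (A x), A x⟫
  have key : ∀ t : ℝ, 0 ≤ 2 * t * a + t ^ 2 * C := by
    intro t
    have h := hA.re_inner_nonneg_left (x + (t : ℂ) • A x)
    have hAAx : ⟪A (A x), x⟫ = ⟪A x, A x⟫ := hsym (A x) x
    rw [map_add, map_smul, inner_add_left, inner_add_right, inner_add_right,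
      inner_smul_left, inner_smul_right, inner_smul_left, inner_smul_right, hAAx] at h
    have hre : ∀ (r : ℝ) (z : ℂ), RCLike.re ((r : ℂ) * z) = r * RCLike.re z :=
      fun r z => Complex.re_ofReal_mul r z
    simp only [Complex.conj_ofReal, map_add, hre, hx] at h
    nlinarith [h]
  have haz : a = 0 := by
    rcases hC0.lt_or_eq with hC | hC
    · have h := key (-(a / C))
      have h2 : 2 * (-(a / C)) * a + (-(a / C)) ^ 2 * C = -(a ^ 2 / C) := by
        field_simp; ring
      rw [h2] at h
      have h3 : a ^ 2 / C ≤ 0 := by linarith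
      have h4 : a ^ 2 ≤ 0 := by
        nlinarith [div_mul_cancel₀ (a ^ 2) hC.ne', mul_nonpos_of_nonpos_of_nonneg h3 hC.le]
      have h5 : a ^ 2 = 0 := le_antisymm h4 (sq_nonneg a)
      exact pow_eq_zero_iff two_ne_zero |>.mp h5
    · have h := key (-1)
      rw [← hC] at h
      nlinarith [h, ha0]
  have hnsq : ‖A x‖ ^ 2 = 0 := by
    rw [← inner_self_eq_norm_sq (𝕜 := ℂ)]; exact haz
  exact norm_eq_zero.mp (pow_eq_zero_iff two_ne_zero |>.mp hnsq)

/-- Self-adjoint operator: kernel vector is orthogonal to closure of range. -/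
lemma mem_closure_range_inner_eq_zero {A : H →L[ℂ] H} (hA : IsSelfAdjoint A)
    {x w : H} (hx : x ∈ (LinearMap.range (A : H →ₗ[ℂ] H)).topologicalClosure (R := ℂ))
    (hw : A w = 0) : ⟪w, x⟫ = 0 := by
  rw [← Submodule.orthogonal_orthogonal_eq_closure] at hx
  have hwmem : w ∈ (LinearMap.range (A : H →ₗ[ℂ] H) : Submodule ℂ H)ᗮ := by
    rw [Submodule.mem_orthogonal]
    rintro u ⟨z, rfl⟩
    have : ⟪A z, w⟫ = ⟪z, A w⟫ :=
      (ContinuousLinearMap.isSelfAdjoint_iff_isSymmetric.mp hA) z w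
    simp [this, hw]
  exact (Submodule.mem_orthogonal _ x).mp hx w hwmem

end Aux

/-- The row operator `T` maps `D_n^d` into `D_{n+1}`: for `x_1, …, x_d ∈ D_n`
one has `∑ Tᵢ xᵢ ∈ D_{n+1}`. -/
theorem stmt6 {H : Type*} [NormedAddCommGroup H] [InnerProductSpace ℂ H] [CompleteSpace H]
    {d : ℕ} (T : Fin d → H →L[ℂ] H)
    (hT : (1 - psiMap T 1).IsPositive) :
    ∀ (n : ℕ) (x : Fin d → H), (∀ i, x i ∈ defectSpace T n) →
      (∑ i, T i (x i)) ∈ defectSpace T (n + 1) := by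
  intro n x hx
  set D : H →L[ℂ] H := 1 - (psiMap T)^[n] 1 with hD
  set E : H →L[ℂ] H := 1 - (psiMap T)^[n + 1] 1 with hE
  have hDpos : D.IsPositive := defect_isPositive T hT n
  have hEpos : E.IsPositive := defect_isPositive T hT (n + 1)
  have hEsym : ∀ u v : H, @inner ℂ _ _ (E u) v = @inner ℂ _ _ u (E v) :=
    ContinuousLinearMap.isSelfAdjoint_iff_isSymmetric.mp hEpos.isSelfAdjoint
  rw [defectSpace, ← Submodule.orthogonal_orthogonal_eq_closure, Submodule.mem_orthogonal]
  intro y hy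
  -- step 1 : E y = 0
  have hEy : E y = 0 := by
    have h1 : @inner ℂ _ _ (E (E y)) y = 0 := by
      have := (Submodule.mem_orthogonal _ y).mp hy (E (E y)) ⟨E y, rfl⟩
      exact this
    have h2 : @inner ℂ _ _ (E y) (E y) = 0 := by rw [← hEsym]; exact h1
    exact inner_self_eq_zero.mp h2
  -- step 2 : each D ((T i)† y) = 0
  have hdecomp : RCLike.re (@inner ℂ _ _ ((1 - psiMap T 1) y) y)
      + ∑ i, RCLike.re (@inner ℂ _ _ (D (adjoint (T i) y)) (adjoint (T i) y)) = 0 := by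
    have hEyy : RCLike.re (@inner ℂ _ _ (E y) y) = 0 := by rw [hEy]; simp
    have : E y = (1 - psiMap T 1) y + psiMap T D y := by
      rw [hE, defect_succ, ContinuousLinearMap.add_apply, hD]
    rw [this] at hEyy
    have hpsi : @inner ℂ _ _ (psiMap T D y) y
        = ∑ i, @inner ℂ _ _ (D (adjoint (T i) y)) (adjoint (T i) y) := by
      rw [psiMap_apply, sum_inner]
      refine Finset.sum_congr rfl fun i _ => ?_
      rw [← ContinuousLinearMap.adjoint_inner_right]
    rw [inner_add_left, map_add, hpsi, map_sum] at hEyy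
    exact hEyy
  have hterm : ∀ i, D (adjoint (T i) y) = 0 := by
    have h1 : (0:ℝ) ≤ RCLike.re (@inner ℂ _ _ ((1 - psiMap T 1) y) y) :=
      hT.re_inner_nonneg_left y
    have h2 : ∀ i ∈ Finset.univ, (0:ℝ) ≤
        RCLike.re (@inner ℂ _ _ (D (adjoint (T i) y)) (adjoint (T i) y)) :=
      fun i _ => hDpos.re_inner_nonneg_left _
    have hsum0 : ∑ i, RCLike.re (@inner ℂ _ _ (D (adjoint (T i) y)) (adjoint (T i) y)) = 0 := by
      have hs := Finset.sum_nonneg h2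
      linarith
    intro i
    refine IsPositive.apply_eq_zero' hDpos ?_
    have := (Finset.sum_eq_zero_iff_of_nonneg h2).mp hsum0 i (Finset.mem_univ i)
    exact this
  -- step 3 : conclude
  have : @inner ℂ _ _ y (∑ i, T i (x i)) = 0 := by
    rw [inner_sum]
    refine Finset.sum_eq_zero fun i _ => ?_
    rw [← ContinuousLinearMap.adjoint_inner_left]
    exact mem_closure_range_inner_eq_zero hDpos.isSelfAdjoint (hx i) (hterm i)
  exact this
end

section
/- Let T be a row contraction with Δ_T = 1 and D_1 = ℂξ on an infinite-dimensional Hilbert space. Then Δ_T^n attains the maximal value 1 + d + ... + d^{n-1} for all n ≤ m if and only if there is no nonzero noncommutative polynomial P of degree less than m with P(T)ξ = 0. -/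
open ContinuousLinearMap

/-- The word operator `T_{w(0)} T_{w(1)} ⋯ T_{w(k-1)}` (the empty word gives the identity). -/
noncomputable def wordOp {H : Type*} [NormedAddCommGroup H] [InnerProductSpace ℂ H]
    [CompleteSpace H] {d : ℕ} (T : Fin d → H →L[ℂ] H) {k : ℕ} (w : Fin k → Fin d) :
    H →L[ℂ] H :=
  (List.ofFn fun j => T (w j)).prod

section Aux

variable {H : Type*} [NormedAddCommGroup H] [InnerProductSpace ℂ H] [CompleteSpace H] {d : ℕ}

local notation "⟪" x ", " y "⟫" => @inner ℂ _ _ x y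

/-- The rank one operator `x ↦ ⟪u, x⟫ • u`. -/
noncomputable def rk1 (u : H) : H →L[ℂ] H := (innerSL ℂ u).smulRight u

@[simp] lemma rk1_apply (u x : H) : rk1 u x = ⟪u, x⟫ • u := rfl

/-- `psiMap` as a linear map on operators. -/
noncomputable def psiLM (T : Fin d → H →L[ℂ] H) : (H →L[ℂ] H) →ₗ[ℂ] (H →L[ℂ] H) where
  toFun := psiMap T
  map_add' X Y := by
    unfold psiMap
    rw [← Finset.sum_add_distrib]
    refine Finset.sum_congr rfl fun i _ => ?_
    ext x
    simp
  map_smul' c X := by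
    unfold psiMap
    rw [RingHom.id_apply]
    ext x
    simp [ContinuousLinearMap.sum_apply, Finset.smul_sum]

lemma psiMap_iterate_eq (T : Fin d → H →L[ℂ] H) (n : ℕ) (X : H →L[ℂ] H) :
    (psiMap T)^[n] X = ((psiLM T) ^ n) X := (Module.End.pow_apply (psiLM T) n X).symm

lemma psiMap_iter_sum {ι : Type*} [Fintype ι] (T : Fin d → H →L[ℂ] H) (n : ℕ)
    (f : ι → H →L[ℂ] H) :
    (psiMap T)^[n] (∑ j, f j) = ∑ j, (psiMap T)^[n] (f j) := by
  simp only [psiMap_iterate_eq, map_sum]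

lemma psiMap_iter_smul (T : Fin d → H →L[ℂ] H) (n : ℕ) (c : ℂ) (X : H →L[ℂ] H) :
    (psiMap T)^[n] (c • X) = c • (psiMap T)^[n] X := by
  simp only [psiMap_iterate_eq, map_smul]

lemma psiMap_iter_sub (T : Fin d → H →L[ℂ] H) (n : ℕ) (X Y : H →L[ℂ] H) :
    (psiMap T)^[n] (X - Y) = (psiMap T)^[n] X - (psiMap T)^[n] Y := by
  simp only [psiMap_iterate_eq, map_sub]

lemma psiMap_rk1 (T : Fin d → H →L[ℂ] H) (u : H) :
    psiMap T (rk1 u) = ∑ i, rk1 (T i u) := by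
  unfold psiMap
  refine Finset.sum_congr rfl fun i _ => ?_
  ext x
  simp [rk1, ContinuousLinearMap.adjoint_inner_right, map_smul]

lemma wordOp_nil (T : Fin d → H →L[ℂ] H) (w : Fin 0 → Fin d) : wordOp T w = 1 := by
  simp [wordOp]

lemma wordOp_cons (T : Fin d → H →L[ℂ] H) {k : ℕ} (i : Fin d) (w : Fin k → Fin d) :
    wordOp T (Fin.cons i w) = T i * wordOp T w := by
  simp [wordOp, List.ofFn_succ]

lemma psiMap_iter_rk1 (T : Fin d → H →L[ℂ] H) (u : H) (k : ℕ) :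
    (psiMap T)^[k] (rk1 u) = ∑ w : Fin k → Fin d, rk1 (wordOp T w u) := by
  induction k with
  | zero =>
      rw [Function.iterate_zero_apply, Fintype.sum_subsingleton _ (Fin.elim0 : Fin 0 → Fin d)]
      rw [wordOp_nil]
      simp
  | succ k ih =>
      have hmap : psiMap T (∑ w : Fin k → Fin d, rk1 (wordOp T w u))
          = ∑ w : Fin k → Fin d, psiMap T (rk1 (wordOp T w u)) := map_sum (psiLM T) _ _
      rw [Function.iterate_succ_apply', ih, hmap]
      calc (∑ w : Fin k → Fin d, psiMap T (rk1 (wordOp T w u)))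
          = ∑ w : Fin k → Fin d, ∑ i, rk1 (wordOp T (Fin.cons i w) u) := by
            refine Finset.sum_congr rfl fun w _ => ?_
            rw [psiMap_rk1]
            refine Finset.sum_congr rfl fun i _ => ?_
            rw [wordOp_cons]
            rfl
        _ = ∑ i, ∑ w : Fin k → Fin d, rk1 (wordOp T (Fin.cons i w) u) := Finset.sum_comm
        _ = ∑ w : Fin (k + 1) → Fin d, rk1 (wordOp T w u) := by
            rw [← Equiv.sum_comp (Fin.consEquiv fun _ => Fin d)
              (fun w : Fin (k + 1) → Fin d => rk1 (wordOp T w u)), Fintype.sum_prod_type]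
            rfl

lemma one_sub_psiMap_iter (T : Fin d → H →L[ℂ] H) (n : ℕ) :
    (1 : H →L[ℂ] H) - (psiMap T)^[n] 1
      = ∑ k ∈ Finset.range n, (psiMap T)^[k] (1 - psiMap T 1) := by
  induction n with
  | zero => simp
  | succ n ih =>
      rw [Finset.sum_range_succ, ← ih, psiMap_iter_sub]
      rw [← Function.iterate_succ_apply]
      abel

lemma mem_orthogonal_span_range {ι : Type*} (v : ι → H) (x : H)
    (h : ∀ j, ⟪v j, x⟫ = 0) : x ∈ (Submodule.span ℂ (Set.range v))ᗮ := by
  rw [Submodule.mem_orthogonal]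
  intro u hu
  induction hu using Submodule.span_induction with
  | mem u hu => obtain ⟨j, rfl⟩ := hu; exact h j
  | zero => simp
  | add a b _ _ ha hb => rw [inner_add_left, ha, hb, add_zero]
  | smul a u _ hu => rw [inner_smul_left, hu, mul_zero]

lemma closure_range_sum_rk1 {ι : Type*} [Fintype ι] (v : ι → H) :
    (LinearMap.range ((∑ j, rk1 (v j) : H →L[ℂ] H) : H →ₗ[ℂ] H)).topologicalClosure
      = Submodule.span ℂ (Set.range v) := by
  set B : H →L[ℂ] H := ∑ j, rk1 (v j) with hB
  have happ : ∀ x, B x = ∑ j, ⟪v j, x⟫ • v j := fun x => by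
    simp [hB, ContinuousLinearMap.sum_apply]
  have hsym : ∀ x y, ⟪B x, y⟫ = ⟪x, B y⟫ := by
    intro x y
    rw [happ, happ, sum_inner, inner_sum]
    refine Finset.sum_congr rfl fun j _ => ?_
    rw [inner_smul_left, inner_smul_right, inner_conj_symm]
    ring
  have hker : LinearMap.ker (B : H →ₗ[ℂ] H) = (Submodule.span ℂ (Set.range v))ᗮ := by
    apply le_antisymm
    · intro x hx
      have hx0 : B x = 0 := hx
      have h1 : ∑ j, (Complex.normSq ⟪v j, x⟫ : ℂ) = 0 := by
        have h0 : ⟪x, B x⟫ = 0 := by rw [hx0, inner_zero_right]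
        rw [happ, inner_sum] at h0
        rw [← h0]
        refine Finset.sum_congr rfl fun j _ => ?_
        have hz : ⟪x, v j⟫ = (starRingEnd ℂ) ⟪v j, x⟫ := (inner_conj_symm x (v j)).symm
        rw [inner_smul_right, hz, Complex.mul_conj]
      have h1' : (∑ j, Complex.normSq ⟪v j, x⟫) = 0 := by exact_mod_cast h1
      refine mem_orthogonal_span_range v x fun j => ?_
      have := (Finset.sum_eq_zero_iff_of_nonneg
        (fun j _ => Complex.normSq_nonneg _)).mp h1' j (Finset.mem_univ j)
      exact Complex.normSq_eq_zero.mp this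
    · intro x hx
      have h0 : ∀ j, ⟪v j, x⟫ = 0 := fun j =>
        (Submodule.mem_orthogonal _ _).mp hx _ (Submodule.subset_span (Set.mem_range_self j))
      have : B x = 0 := by
        rw [happ]
        exact Finset.sum_eq_zero fun j _ => by rw [h0 j, zero_smul]
      exact this
  have ho : (LinearMap.range (B : H →ₗ[ℂ] H))ᗮ = LinearMap.ker (B : H →ₗ[ℂ] H) := by
    ext x
    rw [Submodule.mem_orthogonal]
    constructor
    · intro hx
      have h1 : ⟪B x, B x⟫ = 0 := by
        rw [hsym, ← inner_conj_symm, hx (B (B x)) ⟨B x, rfl⟩, map_zero]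
      exact LinearMap.mem_ker.mpr (inner_self_eq_zero.mp h1)
    · intro hx u hu
      obtain ⟨y, rfl⟩ := hu
      rw [ContinuousLinearMap.coe_coe, hsym, show B x = 0 from LinearMap.mem_ker.mp hx, inner_zero_right]
  haveI : FiniteDimensional ℂ (Submodule.span ℂ (Set.range v)) :=
    FiniteDimensional.span_of_finite ℂ (Set.finite_range v)
  calc (LinearMap.range (B : H →ₗ[ℂ] H)).topologicalClosure
      = (LinearMap.range (B : H →ₗ[ℂ] H))ᗮᗮ := (Submodule.orthogonal_orthogonal_eq_closure _).symm
    _ = (LinearMap.ker (B : H →ₗ[ℂ] H))ᗮ := by rw [ho]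
    _ = (Submodule.span ℂ (Set.range v))ᗮᗮ := by rw [hker]
    _ = (Submodule.span ℂ (Set.range v)).topologicalClosure :=
        Submodule.orthogonal_orthogonal_eq_closure _
    _ = Submodule.span ℂ (Set.range v) :=
        (Submodule.closed_of_finiteDimensional _).submodule_topologicalClosure_eq

lemma range_smul_eq (c : ℂ) (hc : c ≠ 0) (B : H →L[ℂ] H) :
    LinearMap.range ((c • B : H →L[ℂ] H) : H →ₗ[ℂ] H) = LinearMap.range (B : H →ₗ[ℂ] H) := by
  ext y
  constructor
  · rintro ⟨x, rfl⟩
    exact ⟨c • x, by simp [map_smul]⟩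
  · rintro ⟨x, rfl⟩
    exact ⟨c⁻¹ • x, by simp [smul_smul, mul_inv_cancel₀ hc, inv_mul_cancel₀ hc]⟩

lemma exists_lam (T : Fin d → H →L[ℂ] H) (hT : (1 - psiMap T 1).IsPositive)
    (ξ : H) (hξ : ξ ≠ 0) (hD : defectSpace T 1 = Submodule.span ℂ {ξ}) :
    ∃ lam : ℂ, lam ≠ 0 ∧ (1 : H →L[ℂ] H) - psiMap T 1 = lam • rk1 ξ := by
  set A : H →L[ℂ] H := 1 - psiMap T 1 with hA
  have hD1 : (LinearMap.range (A : H →ₗ[ℂ] H)).topologicalClosure = Submodule.span ℂ {ξ} := by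
    have : defectSpace T 1 = (LinearMap.range (A : H →ₗ[ℂ] H)).topologicalClosure := by
      unfold defectSpace
      rw [Function.iterate_one]
    rw [← this, hD]
  haveI : FiniteDimensional ℂ (Submodule.span ℂ ({ξ} : Set H)) :=
    FiniteDimensional.span_of_finite ℂ (Set.finite_singleton ξ)
  have hclosed : IsClosed ((Submodule.span ℂ ({ξ} : Set H)) : Set H) :=
    Submodule.closed_of_finiteDimensional _
  have hrange : ∀ x : H, A x ∈ Submodule.span ℂ ({ξ} : Set H) := fun x => by
    have h1 : A x ∈ (LinearMap.range (A : H →ₗ[ℂ] H)).topologicalClosure :=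
      Submodule.le_topologicalClosure _ (LinearMap.mem_range_self (A : H →ₗ[ℂ] H) x)
    rwa [hD1] at h1
  have hsym : ∀ x y : H, ⟪A x, y⟫ = ⟪x, A y⟫ := by
    intro x y
    have := ContinuousLinearMap.adjoint_inner_left A y x
    rwa [hT.isSelfAdjoint.adjoint_eq] at this
  have hAne : A ≠ 0 := by
    intro h0
    rw [h0] at hD1
    have hbot : (LinearMap.range ((0 : H →L[ℂ] H) : H →ₗ[ℂ] H)).topologicalClosure = ⊥ := by
      have h2 : LinearMap.range ((0 : H →L[ℂ] H) : H →ₗ[ℂ] H) = ⊥ := by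
          rw [ContinuousLinearMap.coe_zero]; exact LinearMap.range_zero
      rw [h2]
      exact IsClosed.submodule_topologicalClosure_eq
        (by rw [Submodule.bot_coe]; exact isClosed_singleton)
    rw [hbot] at hD1
    exact hξ (Submodule.span_singleton_eq_bot.mp hD1.symm)
  obtain ⟨μ, hμ⟩ := Submodule.mem_span_singleton.mp (hrange ξ)
  have hN : ((‖ξ‖ : ℂ) ^ 2) ≠ 0 :=
    pow_ne_zero _ (Complex.ofReal_ne_zero.mpr (norm_ne_zero_iff.mpr hξ))
  have key : ∀ x : H, A x = ((starRingEnd ℂ) μ / (‖ξ‖ : ℂ) ^ 2) • rk1 ξ x := by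
    intro x
    obtain ⟨c, hc⟩ := Submodule.mem_span_singleton.mp (hrange x)
    have h1 : (starRingEnd ℂ) μ * ⟪ξ, x⟫ = c * (‖ξ‖ : ℂ) ^ 2 := by
      have h2 := hsym ξ x
      rw [← hμ, ← hc, inner_smul_left, inner_smul_right, inner_self_eq_norm_sq_to_K] at h2
      exact h2
    rw [← hc, rk1_apply, smul_smul]
    congr 1
    rw [div_mul_eq_mul_div, eq_div_iff hN]
    exact h1.symm
  have hμne : μ ≠ 0 := by
    intro h0
    apply hAne
    ext x
    rw [key x, h0]
    simp
  refine ⟨(starRingEnd ℂ) μ / (‖ξ‖ : ℂ) ^ 2, ?_, ?_⟩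
  · exact div_ne_zero (by simpa using hμne) hN
  · ext x
    rw [key x]
    rfl

lemma defect_eq_span (T : Fin d → H →L[ℂ] H) (ξ : H) (lam : ℂ) (hlam : lam ≠ 0)
    (hA : (1 : H →L[ℂ] H) - psiMap T 1 = lam • rk1 ξ) (n : ℕ) :
    defectSpace T n = Submodule.span ℂ
      (Set.range fun w : (Σ k : Fin n, (Fin (k : ℕ) → Fin d)) => wordOp T w.2 ξ) := by
  have h1 : (1 : H →L[ℂ] H) - (psiMap T)^[n] 1
      = lam • ∑ w : (Σ k : Fin n, (Fin (k : ℕ) → Fin d)), rk1 (wordOp T w.2 ξ) := by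
    rw [one_sub_psiMap_iter, hA]
    have h2 : ∀ k : ℕ, (psiMap T)^[k] (lam • rk1 ξ)
        = lam • ∑ w : Fin k → Fin d, rk1 (wordOp T w ξ) := by
      intro k
      rw [psiMap_iter_smul, psiMap_iter_rk1]
    calc (∑ k ∈ Finset.range n, (psiMap T)^[k] (lam • rk1 ξ))
        = ∑ k ∈ Finset.range n, lam • ∑ w : Fin k → Fin d, rk1 (wordOp T w ξ) :=
          Finset.sum_congr rfl fun k _ => h2 k
      _ = lam • ∑ k ∈ Finset.range n, ∑ w : Fin k → Fin d, rk1 (wordOp T w ξ) :=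
          (Finset.smul_sum).symm
      _ = lam • ∑ w : (Σ k : Fin n, (Fin (k : ℕ) → Fin d)), rk1 (wordOp T w.2 ξ) := by
          congr 1
          rw [← Fin.sum_univ_eq_sum_range
            (fun k => ∑ w : Fin k → Fin d, rk1 (wordOp T w ξ)) n]
          rw [← Finset.univ_sigma_univ, Finset.sum_sigma]
  unfold defectSpace
  rw [h1, range_smul_eq lam hlam, closure_range_sum_rk1]

lemma rank_span_range_eq {ι : Type*} [Fintype ι] {v : ι → H}
    (hv : LinearIndependent ℂ v) :
    Module.rank ℂ (Submodule.span ℂ (Set.range v)) = Fintype.card ι := by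
  classical
  rw [rank_span hv, Cardinal.mk_fintype, Set.card_range_of_injective hv.injective]

lemma linearIndependent_of_rank_eq {ι : Type*} [Fintype ι] {v : ι → H}
    (h : Module.rank ℂ (Submodule.span ℂ (Set.range v)) = Fintype.card ι) :
    LinearIndependent ℂ v := by
  haveI : FiniteDimensional ℂ (Submodule.span ℂ (Set.range v)) :=
    FiniteDimensional.span_of_finite ℂ (Set.finite_range v)
  rw [linearIndependent_iff_card_eq_finrank_span]
  have h2 : ((Module.finrank ℂ (Submodule.span ℂ (Set.range v))) : Cardinal)
      = (Fintype.card ι : Cardinal) := by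
    rw [Module.finrank_eq_rank, h]
  have h3 : Module.finrank ℂ (Submodule.span ℂ (Set.range v)) = Fintype.card ι := by
    exact_mod_cast h2
  rw [Set.finrank, h3]

lemma card_words_cast (n : ℕ) :
    ((Fintype.card (Σ k : Fin n, (Fin (k : ℕ) → Fin d))) : Cardinal)
      = ∑ i ∈ Finset.range n, (d : Cardinal) ^ i := by
  rw [Fintype.card_sigma, Nat.cast_sum,
    ← Fin.sum_univ_eq_sum_range (fun i => (d : Cardinal) ^ i) n]
  refine Finset.sum_congr rfl fun k _ => ?_
  rw [Fintype.card_fun, Fintype.card_fin, Fintype.card_fin, Nat.cast_pow]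

end Aux

/-- With `D_1 = ℂξ`, the defect dimensions attain the maximal value
`1 + d + ⋯ + d^{n-1}` for all `n ≤ m` iff no nonzero noncommutative polynomial of degree
less than `m` annihilates `ξ`; a polynomial of degree `< m` is encoded by its coefficient
function `c` on words of length `< m`. -/
theorem stmt14 {H : Type*} [NormedAddCommGroup H] [InnerProductSpace ℂ H] [CompleteSpace H]
    {d : ℕ} (T : Fin d → H →L[ℂ] H)
    (hT : (1 - psiMap T 1).IsPositive)
    (hinf : ¬ FiniteDimensional ℂ H)
    (ξ : H) (hξ : ξ ≠ 0) (hD : defectSpace T 1 = Submodule.span ℂ {ξ})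
    (m : ℕ) :
    (∀ n : ℕ, n ≤ m →
      Module.rank ℂ (defectSpace T n) = ∑ i ∈ Finset.range n, (d : Cardinal) ^ i)
      ↔
    (∀ c : (Σ k : Fin m, (Fin (k : ℕ) → Fin d)) → ℂ,
      (∑ w : (Σ k : Fin m, (Fin (k : ℕ) → Fin d)), c w • wordOp T w.2 ξ) = 0 → c = 0) := by
  obtain ⟨lam, hlam, hA⟩ := exists_lam T hT ξ hξ hD
  have hdefect := defect_eq_span T ξ lam hlam hA
  constructor
  · intro h c hc
    have hm := h m le_rfl
    rw [hdefect m] at hm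
    have li : LinearIndependent ℂ
        (fun w : (Σ k : Fin m, (Fin (k : ℕ) → Fin d)) => wordOp T w.2 ξ) := by
      apply linearIndependent_of_rank_eq
      rw [hm, ← card_words_cast m]
    funext w
    exact Fintype.linearIndependent_iff.mp li c hc w
  · intro h n hn
    have li_m : LinearIndependent ℂ
        (fun w : (Σ k : Fin m, (Fin (k : ℕ) → Fin d)) => wordOp T w.2 ξ) :=
      Fintype.linearIndependent_iff.mpr fun g hg i => by rw [h g hg]; rfl
    let e : (Σ k : Fin n, (Fin (k : ℕ) → Fin d)) → (Σ k : Fin m, (Fin (k : ℕ) → Fin d)) :=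
      fun w => ⟨⟨(w.1 : ℕ), lt_of_lt_of_le w.1.2 hn⟩, w.2⟩
    have einj : Function.Injective e := by
      rintro ⟨k1, w1⟩ ⟨k2, w2⟩ hab
      injection hab with h1 h2
      have hval : (k1 : ℕ) = (k2 : ℕ) := by
        have h1' := congrArg Fin.val h1
        exact h1'
      have hk : k1 = k2 := Fin.ext hval
      subst hk
      exact congrArg (Sigma.mk k1) (eq_of_heq h2)
    have li_n : LinearIndependent ℂ
        (fun w : (Σ k : Fin n, (Fin (k : ℕ) → Fin d)) => wordOp T w.2 ξ) :=
      li_m.comp e einj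
    rw [hdefect n, rank_span_range_eq li_n, card_words_cast n]
end
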